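/- The map φ_{V→E}: Pic^0(D_V) → Pic^0(D_E) defined by φ_{V→E}([x]) = [y] whenever (x, 0, 0) ≈_W (0, −y, 0) is a well-defined group isomorphism between the sandpile groups of D_V and D_E. -/

import Mathlib

open Finset

/-- A combinatorial trinity: a triangulation of the sphere `S²` whose `0`-simplices are
properly three-colored by `V` (violet), `E` (emerald) and `R` (red).  It is encoded by
its sets `Tw` of white and `Tb` of black triangles, the color of each corner of each
triangle, and the three edge-gluing bijections `σR`, `σE`, `σV` matching each white
triangle with the black triangle sharing its red (resp. emerald, violet) edge.  The
link conditions state that the triangles around each vertex form a single cycle, and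
connectivity of the surface is required; the sphere (Euler) condition
`|V| + |E| + |R| = |Tw| + 2` appears as a hypothesis of the theorems. -/
structure Trinity (V E R Tw Tb : Type) where
  vw : Tw → V
  ew : Tw → E
  rW : Tw → R
  vb : Tb → V
  eb : Tb → E
  rb : Tb → R
  σR : Tw ≃ Tb
  σE : Tw ≃ Tb
  σV : Tw ≃ Tb
  σR_v : ∀ t, vb (σR t) = vw t
  σR_e : ∀ t, eb (σR t) = ew t
  σE_v : ∀ t, vb (σE t) = vw t
  σE_r : ∀ t, rb (σE t) = rW t
  σV_e : ∀ t, eb (σV t) = ew t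
  σV_r : ∀ t, rb (σV t) = rW t
  vsurj : Function.Surjective vw
  esurj : Function.Surjective ew
  rsurj : Function.Surjective rW
  linkV : ∀ t t' : Tw, vw t = vw t' →
    Relation.ReflTransGen (fun a b => σR a = σE b) t t'
  linkE : ∀ t t' : Tw, ew t = ew t' →
    Relation.ReflTransGen (fun a b => σR a = σV b) t t'
  linkR : ∀ t t' : Tw, rW t = rW t' →
    Relation.ReflTransGen (fun a b => σE a = σV b) t t'
  conn : ∀ t t' : Tw, Relation.ReflTransGen (fun a b =>
    σR a = σE b ∨ σR a = σV b ∨ σE a = σR b ∨ σE a = σV b ∨ σV a = σR b ∨ σV a = σE b) t t'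

namespace Trinity

variable {V E R Tw Tb : Type}

/-- The characteristic vector (in `ℤ^{V∪E∪R}`) of a white triangle. -/
def chi [DecidableEq V] [DecidableEq E] [DecidableEq R]
    (S : Trinity V E R Tw Tb) (t : Tw) : (V → ℤ) × (E → ℤ) × (R → ℤ) :=
  (fun v => if S.vw t = v then 1 else 0,
   fun e => if S.ew t = e then 1 else 0,
   fun r => if S.rW t = r then 1 else 0)

/-- The Laplacian of the balanced plane digraph `D_V` applied to `z : V → ℤ`: for each
white triangle `t`, the corresponding edge of `D_V` points from the violet vertex of
the black triangle `σV t` to the violet vertex of `t` (they share their violet edge),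
and firing moves one chip along each such edge. -/
def lapV [Fintype Tw] [DecidableEq V] (S : Trinity V E R Tw Tb) (z : V → ℤ) : V → ℤ :=
  fun u => ∑ t : Tw, z (S.vb (S.σV t)) *
    ((if S.vw t = u then 1 else 0) - (if S.vb (S.σV t) = u then 1 else 0))

/-- Linear equivalence of chip configurations on `D_V`. -/
def linEqV [Fintype Tw] [DecidableEq V] (S : Trinity V E R Tw Tb) (x y : V → ℤ) : Prop :=
  ∃ z : V → ℤ, y = x + S.lapV z

/-- The Laplacian of the balanced plane digraph `D_E` applied to `z : E → ℤ`. -/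
def lapE [Fintype Tw] [DecidableEq E] (S : Trinity V E R Tw Tb) (z : E → ℤ) : E → ℤ :=
  fun u => ∑ t : Tw, z (S.eb (S.σE t)) *
    ((if S.ew t = u then 1 else 0) - (if S.eb (S.σE t) = u then 1 else 0))

/-- Linear equivalence of chip configurations on `D_E`. -/
def linEqE [Fintype Tw] [DecidableEq E] (S : Trinity V E R Tw Tb) (x y : E → ℤ) : Prop :=
  ∃ z : E → ℤ, y = x + S.lapE z

/-- The red graph `G_R`: the bipartite graph on `V ∪ E` formed by the red edges (the
support simple graph; each red edge lies in a unique white triangle). -/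
def SR (S : Trinity V E R Tw Tb) : SimpleGraph (V ⊕ E) where
  Adj a b := ∃ t : Tw, (a = Sum.inl (S.vw t) ∧ b = Sum.inr (S.ew t)) ∨
    (b = Sum.inl (S.vw t) ∧ a = Sum.inr (S.ew t))
  symm := by
    constructor
    rintro a b ⟨t, h | h⟩
    exacts [⟨t, Or.inr h⟩, ⟨t, Or.inl h⟩]
  loopless := by
    constructor
    rintro a ⟨t, ⟨h1, h2⟩ | ⟨h1, h2⟩⟩ <;> subst h1 <;> simp at h2

/-- The violet graph `G_V`: the bipartite graph on `R ∪ E` formed by the violet edges. -/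
def SV (S : Trinity V E R Tw Tb) : SimpleGraph (R ⊕ E) where
  Adj a b := ∃ t : Tw, (a = Sum.inl (S.rW t) ∧ b = Sum.inr (S.ew t)) ∨
    (b = Sum.inl (S.rW t) ∧ a = Sum.inr (S.ew t))
  symm := by
    constructor
    rintro a b ⟨t, h | h⟩
    exacts [⟨t, Or.inr h⟩, ⟨t, Or.inl h⟩]
  loopless := by
    constructor
    rintro a ⟨t, ⟨h1, h2⟩ | ⟨h1, h2⟩⟩ <;> subst h1 <;> simp at h2

/-- `f : E → ℤ` is a hypertree of the red graph `G_R` on `E`. -/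
def hypertreeRE (S : Trinity V E R Tw Tb) (f : E → ℤ) : Prop :=
  ∃ T : SimpleGraph (V ⊕ E), T ≤ S.SR ∧ T.IsTree ∧
    ∀ e : E, ((T.neighborSet (Sum.inr e)).ncard : ℤ) = f e + 1

/-- `f : E → ℤ` is a hypertree of the violet graph `G_V` on `E`. -/
def hypertreeVE (S : Trinity V E R Tw Tb) (f : E → ℤ) : Prop :=
  ∃ T : SimpleGraph (R ⊕ E), T ≤ S.SV ∧ T.IsTree ∧
    ∀ e : E, ((T.neighborSet (Sum.inr e)).ncard : ℤ) = f e + 1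

/-- `f : V → ℤ` is a hypertree of the red graph `G_R` on `V`. -/
def hypertreeRV (S : Trinity V E R Tw Tb) (f : V → ℤ) : Prop :=
  ∃ T : SimpleGraph (V ⊕ E), T ≤ S.SR ∧ T.IsTree ∧
    ∀ v : V, ((T.neighborSet (Sum.inl v)).ncard : ℤ) = f v + 1

/-- The common degree `d(e) = d_{G_R}(e) = d_{G_V}(e)` of an emerald vertex, i.e. the
number of white triangles at `e`. -/
noncomputable def dE (S : Trinity V E R Tw Tb) (e : E) : ℤ := (({t : Tw | S.ew t = e}).ncard : ℤ)

end Trinity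

/-- The graph of the map `φ_{V→E}` on representatives: `P x y` holds iff `x` and `y`
are degree-zero chip configurations on `V` resp. `E` with
`(x, 0, 0) ≈_W (0, −y, 0)`, i.e. `(x, y, 0)` is an integer combination of white
triangles. -/
def phiRel {V E R Tw Tb : Type} [Fintype V] [Fintype E] [Fintype Tw]
    [DecidableEq V] [DecidableEq E] [DecidableEq R]
    (S : Trinity V E R Tw Tb) (x : V → ℤ) (y : E → ℤ) : Prop :=
  (∑ v, x v = 0) ∧ (∑ e, y e = 0) ∧
    ∃ c : Tw → ℤ,
      ((x, y, 0) : (V → ℤ) × (E → ℤ) × (R → ℤ)) = ∑ t : Tw, c t • S.chi t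

namespace Trinity
set_option linter.unusedSectionVars false

section Aux

variable {V E R Tw Tb : Type} {k : Type} [CommRing k]
variable [Fintype Tw] [DecidableEq V] [DecidableEq E] [DecidableEq R] [DecidableEq Tw]

/-- fiber sum over violet vertices -/
def AV (S : Trinity V E R Tw Tb) (c : Tw → k) : V → k :=
  fun v => ∑ t : Tw, if S.vw t = v then c t else 0

def AE (S : Trinity V E R Tw Tb) (c : Tw → k) : E → k :=
  fun e => ∑ t : Tw, if S.ew t = e then c t else 0

def AR (S : Trinity V E R Tw Tb) (c : Tw → k) : R → k :=
  fun r => ∑ t : Tw, if S.rW t = r then c t else 0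

def ind (t : Tw) : Tw → k := fun s => if s = t then 1 else 0

/-- delta function -/
def dlt {β : Type} [DecidableEq β] (b : β) : β → k := fun u => if b = u then 1 else 0

def cE (S : Trinity V E R Tw Tb) (w : E → k) : Tw → k :=
  fun t => w (S.eb (S.σE t)) - w (S.ew t)

def cV (S : Trinity V E R Tw Tb) (z : V → k) : Tw → k :=
  fun t => z (S.vb (S.σV t)) - z (S.vw t)

variable (S : Trinity V E R Tw Tb)

lemma AV_add (c c' : Tw → k) : AV S (c + c') = AV S c + AV S c' := by
  funext v
  simp only [AV, Pi.add_apply, ← Finset.sum_add_distrib]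
  exact Finset.sum_congr rfl fun t _ => by split_ifs <;> simp

lemma AE_add (c c' : Tw → k) : AE S (c + c') = AE S c + AE S c' := by
  funext v
  simp only [AE, Pi.add_apply, ← Finset.sum_add_distrib]
  exact Finset.sum_congr rfl fun t _ => by split_ifs <;> simp

lemma AR_add (c c' : Tw → k) : AR S (c + c') = AR S c + AR S c' := by
  funext v
  simp only [AR, Pi.add_apply, ← Finset.sum_add_distrib]
  exact Finset.sum_congr rfl fun t _ => by split_ifs <;> simp

lemma AV_sub (c c' : Tw → k) : AV S (c - c') = AV S c - AV S c' := by
  funext v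
  simp only [AV, Pi.sub_apply, ← Finset.sum_sub_distrib]
  exact Finset.sum_congr rfl fun t _ => by split_ifs <;> simp

lemma AE_sub (c c' : Tw → k) : AE S (c - c') = AE S c - AE S c' := by
  funext v
  simp only [AE, Pi.sub_apply, ← Finset.sum_sub_distrib]
  exact Finset.sum_congr rfl fun t _ => by split_ifs <;> simp

lemma AR_sub (c c' : Tw → k) : AR S (c - c') = AR S c - AR S c' := by
  funext v
  simp only [AR, Pi.sub_apply, ← Finset.sum_sub_distrib]
  exact Finset.sum_congr rfl fun t _ => by split_ifs <;> simp

lemma AV_smul (a : k) (c : Tw → k) : AV S (a • c) = a • AV S c := by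
  funext v
  simp only [AV, Pi.smul_apply, smul_eq_mul, Finset.mul_sum]
  exact Finset.sum_congr rfl fun t _ => by split_ifs <;> simp

lemma AE_smul (a : k) (c : Tw → k) : AE S (a • c) = a • AE S c := by
  funext v
  simp only [AE, Pi.smul_apply, smul_eq_mul, Finset.mul_sum]
  exact Finset.sum_congr rfl fun t _ => by split_ifs <;> simp

lemma AR_smul (a : k) (c : Tw → k) : AR S (a • c) = a • AR S c := by
  funext v
  simp only [AR, Pi.smul_apply, smul_eq_mul, Finset.mul_sum]
  exact Finset.sum_congr rfl fun t _ => by split_ifs <;> simp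

lemma AV_zero : AV S (0 : Tw → k) = 0 := by
  funext v; simp [AV]

lemma AE_zero : AE S (0 : Tw → k) = 0 := by
  funext v; simp [AE]

lemma AR_zero : AR S (0 : Tw → k) = 0 := by
  funext v; simp [AR]

lemma AV_ind (t : Tw) : AV S (ind t : Tw → k) = dlt (S.vw t) := by
  funext v
  rw [AV, Finset.sum_eq_single t]
  · simp [ind, dlt]
  · intro s _ hs
    simp [ind, hs]
  · intro h; exact absurd (Finset.mem_univ t) h

lemma AE_ind (t : Tw) : AE S (ind t : Tw → k) = dlt (S.ew t) := by
  funext v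
  rw [AE, Finset.sum_eq_single t]
  · simp [ind, dlt]
  · intro s _ hs
    simp [ind, hs]
  · intro h; exact absurd (Finset.mem_univ t) h

lemma AR_ind (t : Tw) : AR S (ind t : Tw → k) = dlt (S.rW t) := by
  funext v
  rw [AR, Finset.sum_eq_single t]
  · simp [ind, dlt]
  · intro s _ hs
    simp [ind, hs]
  · intro h; exact absurd (Finset.mem_univ t) h

end Aux

end Trinity
namespace Trinity

section Aux2
set_option linter.unusedSectionVars false

variable {V E R Tw Tb : Type} {k : Type} [CommRing k]
variable [Fintype Tw] [DecidableEq V] [DecidableEq E] [DecidableEq R] [DecidableEq Tw]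
variable (S : Trinity V E R Tw Tb)

lemma sum_reindex_fiber {β : Type} [DecidableEq β] (g : Tw ≃ Tw) (p : Tw → β)
    (f1 f2 : Tw → k) (hp : ∀ t, p (g t) = p t) (hf : ∀ t, f1 (g t) = f2 t) (b : β) :
    ∑ t : Tw, (if p t = b then f1 t else 0) = ∑ t : Tw, (if p t = b then f2 t else 0) := by
  rw [← Equiv.sum_comp g (fun t => if p t = b then f1 t else 0)]
  exact Finset.sum_congr rfl fun t _ => by rw [hp, hf]

lemma ite_sub_zero {P : Prop} [Decidable P] (a b : k) :
    (if P then a - b else 0) = (if P then a else 0) - (if P then b else 0) := by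
  split_ifs <;> simp

lemma AV_cE (w : E → k) : AV S (cE S w) = 0 := by
  funext v
  simp only [AV, cE, Pi.zero_apply, ite_sub_zero, Finset.sum_sub_distrib]
  rw [sum_reindex_fiber (S.σR.trans S.σE.symm) S.vw
      (fun t => w (S.eb (S.σE t))) (fun t => w (S.ew t))
      (fun t => by simp only [Equiv.trans_apply]; rw [← S.σE_v, Equiv.apply_symm_apply, S.σR_v])
      (fun t => by simp only [Equiv.trans_apply]; rw [Equiv.apply_symm_apply, S.σR_e]) v,
    sub_self]

lemma AR_cE (w : E → k) : AR S (cE S w) = 0 := by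
  funext r
  simp only [AR, cE, Pi.zero_apply, ite_sub_zero, Finset.sum_sub_distrib]
  rw [sum_reindex_fiber (S.σV.trans S.σE.symm) S.rW
      (fun t => w (S.eb (S.σE t))) (fun t => w (S.ew t))
      (fun t => by simp only [Equiv.trans_apply]; rw [← S.σE_r, Equiv.apply_symm_apply, S.σV_r])
      (fun t => by simp only [Equiv.trans_apply]; rw [Equiv.apply_symm_apply, S.σV_e]) r,
    sub_self]

lemma AE_cV (z : V → k) : AE S (cV S z) = 0 := by
  funext e
  simp only [AE, cV, Pi.zero_apply, ite_sub_zero, Finset.sum_sub_distrib]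
  rw [sum_reindex_fiber (S.σR.trans S.σV.symm) S.ew
      (fun t => z (S.vb (S.σV t))) (fun t => z (S.vw t))
      (fun t => by simp only [Equiv.trans_apply]; rw [← S.σV_e, Equiv.apply_symm_apply, S.σR_e])
      (fun t => by simp only [Equiv.trans_apply]; rw [Equiv.apply_symm_apply, S.σR_v]) e,
    sub_self]

lemma AR_cV (z : V → k) : AR S (cV S z) = 0 := by
  funext r
  simp only [AR, cV, Pi.zero_apply, ite_sub_zero, Finset.sum_sub_distrib]
  rw [sum_reindex_fiber (S.σE.trans S.σV.symm) S.rW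
      (fun t => z (S.vb (S.σV t))) (fun t => z (S.vw t))
      (fun t => by simp only [Equiv.trans_apply]; rw [← S.σV_r, Equiv.apply_symm_apply, S.σE_r])
      (fun t => by simp only [Equiv.trans_apply]; rw [Equiv.apply_symm_apply, S.σE_v]) r,
    sub_self]

lemma AE_cE (w : E → ℤ) : AE S (cE S w) = S.lapE w := by
  funext e
  have key : ∑ t : Tw, (if S.ew t = e then w (S.ew t) else 0)
      = ∑ t : Tw, (if S.eb (S.σE t) = e then w (S.eb (S.σE t)) else 0) := by
    rw [← Equiv.sum_comp (S.σV.trans S.σE.symm)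
        (fun t => if S.eb (S.σE t) = e then w (S.eb (S.σE t)) else 0)]
    refine Finset.sum_congr rfl fun t _ => ?_
    simp only [Equiv.trans_apply, Equiv.apply_symm_apply, S.σV_e]
  simp only [AE, cE, lapE, mul_sub, mul_ite, mul_one, mul_zero, ite_sub_zero,
    Finset.sum_sub_distrib, key]

lemma AV_cV (z : V → ℤ) : AV S (cV S z) = S.lapV z := by
  funext v
  have key : ∑ t : Tw, (if S.vw t = v then z (S.vw t) else 0)
      = ∑ t : Tw, (if S.vb (S.σV t) = v then z (S.vb (S.σV t)) else 0) := by
    rw [← Equiv.sum_comp (S.σR.trans S.σV.symm)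
        (fun t => if S.vb (S.σV t) = v then z (S.vb (S.σV t)) else 0)]
    refine Finset.sum_congr rfl fun t _ => ?_
    simp only [Equiv.trans_apply, Equiv.apply_symm_apply, S.σR_v]
  simp only [AV, cV, lapV, mul_sub, mul_ite, mul_one, mul_zero, ite_sub_zero,
    Finset.sum_sub_distrib, key]

end Aux2

end Trinity
namespace Trinity

section Aux3
set_option linter.unusedSectionVars false

variable {V E R Tw Tb : Type} {k : Type} [CommRing k]
variable [Fintype Tw] [DecidableEq V] [DecidableEq E] [DecidableEq R] [DecidableEq Tw]
variable (S : Trinity V E R Tw Tb)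

/-- The step relation of `conn`. -/
def cstep (S : Trinity V E R Tw Tb) : Tw → Tw → Prop := fun a b =>
  S.σR a = S.σE b ∨ S.σR a = S.σV b ∨ S.σE a = S.σR b ∨ S.σE a = S.σV b ∨
    S.σV a = S.σR b ∨ S.σV a = S.σE b

lemma AV_two (a b : Tw) : AV S (ind a - ind b : Tw → k) = dlt (S.vw a) - dlt (S.vw b) := by
  rw [AV_sub, AV_ind, AV_ind]

lemma AE_two (a b : Tw) : AE S (ind a - ind b : Tw → k) = dlt (S.ew a) - dlt (S.ew b) := by
  rw [AE_sub, AE_ind, AE_ind]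

lemma AR_two (a b : Tw) : AR S (ind a - ind b : Tw → k) = dlt (S.rW a) - dlt (S.rW b) := by
  rw [AR_sub, AR_ind, AR_ind]

lemma stepV (a b : Tw) (h : cstep S a b) :
    ∃ c : Tw → k, AV S c = dlt (S.vw a) - dlt (S.vw b) ∧ AR S c = 0 := by
  rcases h with h | h | h | h | h | h
  · have hv : S.vw a = S.vw b := by rw [← S.σR_v a, h, S.σE_v]
    exact ⟨0, by rw [AV_zero, hv, sub_self], AR_zero S⟩
  · set t₁ := S.σE.symm (S.σR a) with ht₁
    have h1 : S.σE t₁ = S.σR a := S.σE.apply_symm_apply _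
    have hv : S.vw t₁ = S.vw a := by rw [← S.σE_v t₁, h1, S.σR_v]
    have hr : S.rW t₁ = S.rW b := by rw [← S.σE_r t₁, h1, h, S.σV_r]
    exact ⟨ind t₁ - ind b, by rw [AV_two, hv], by rw [AR_two, hr, sub_self]⟩
  · have hv : S.vw a = S.vw b := by rw [← S.σE_v a, h, S.σR_v]
    exact ⟨0, by rw [AV_zero, hv, sub_self], AR_zero S⟩
  · have hr : S.rW a = S.rW b := by rw [← S.σE_r a, h, S.σV_r]
    exact ⟨ind a - ind b, by rw [AV_two], by rw [AR_two, hr, sub_self]⟩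
  · set t₁ := S.σE.symm (S.σR b) with ht₁
    have h1 : S.σE t₁ = S.σR b := S.σE.apply_symm_apply _
    have hv : S.vw t₁ = S.vw b := by rw [← S.σE_v t₁, h1, S.σR_v]
    have hr : S.rW t₁ = S.rW a := by rw [← S.σE_r t₁, h1, ← h, S.σV_r]
    exact ⟨ind a - ind t₁, by rw [AV_two, hv], by rw [AR_two, hr, sub_self]⟩
  · have hr : S.rW a = S.rW b := by rw [← S.σV_r a, h, S.σE_r]
    exact ⟨ind a - ind b, by rw [AV_two], by rw [AR_two, hr, sub_self]⟩

lemma stepRV (a b : Tw) (h : cstep S a b) :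
    ∃ c : Tw → k, AV S c = 0 ∧ AR S c = dlt (S.rW a) - dlt (S.rW b) := by
  rcases h with h | h | h | h | h | h
  · have hv : S.vw a = S.vw b := by rw [← S.σR_v a, h, S.σE_v]
    exact ⟨ind a - ind b, by rw [AV_two, hv, sub_self], by rw [AR_two]⟩
  · set t₁ := S.σE.symm (S.σR a) with ht₁
    have h1 : S.σE t₁ = S.σR a := S.σE.apply_symm_apply _
    have hv : S.vw t₁ = S.vw a := by rw [← S.σE_v t₁, h1, S.σR_v]
    have hr : S.rW t₁ = S.rW b := by rw [← S.σE_r t₁, h1, h, S.σV_r]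
    exact ⟨ind a - ind t₁, by rw [AV_two, hv, sub_self], by rw [AR_two, hr]⟩
  · have hv : S.vw a = S.vw b := by rw [← S.σE_v a, h, S.σR_v]
    exact ⟨ind a - ind b, by rw [AV_two, hv, sub_self], by rw [AR_two]⟩
  · have hr : S.rW a = S.rW b := by rw [← S.σE_r a, h, S.σV_r]
    exact ⟨0, AV_zero S, by rw [AR_zero, hr, sub_self]⟩
  · set t₁ := S.σE.symm (S.σR b) with ht₁
    have h1 : S.σE t₁ = S.σR b := S.σE.apply_symm_apply _
    have hv : S.vw t₁ = S.vw b := by rw [← S.σE_v t₁, h1, S.σR_v]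
    have hr : S.rW t₁ = S.rW a := by rw [← S.σE_r t₁, h1, ← h, S.σV_r]
    exact ⟨ind t₁ - ind b, by rw [AV_two, hv, sub_self], by rw [AR_two, hr]⟩
  · have hr : S.rW a = S.rW b := by rw [← S.σV_r a, h, S.σE_r]
    exact ⟨0, AV_zero S, by rw [AR_zero, hr, sub_self]⟩

lemma stepE (a b : Tw) (h : cstep S a b) :
    ∃ c : Tw → k, AE S c = dlt (S.ew a) - dlt (S.ew b) ∧ AR S c = 0 := by
  rcases h with h | h | h | h | h | h
  · set t₁ := S.σV.symm (S.σR a) with ht₁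
    have h1 : S.σV t₁ = S.σR a := S.σV.apply_symm_apply _
    have he : S.ew t₁ = S.ew a := by rw [← S.σV_e t₁, h1, S.σR_e]
    have hr : S.rW t₁ = S.rW b := by rw [← S.σV_r t₁, h1, h, S.σE_r]
    exact ⟨ind t₁ - ind b, by rw [AE_two, he], by rw [AR_two, hr, sub_self]⟩
  · have he : S.ew a = S.ew b := by rw [← S.σR_e a, h, S.σV_e]
    exact ⟨0, by rw [AE_zero, he, sub_self], AR_zero S⟩
  · set t₁ := S.σV.symm (S.σR b) with ht₁
    have h1 : S.σV t₁ = S.σR b := S.σV.apply_symm_apply _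
    have he : S.ew t₁ = S.ew b := by rw [← S.σV_e t₁, h1, S.σR_e]
    have hr : S.rW t₁ = S.rW a := by rw [← S.σV_r t₁, h1, ← h, S.σE_r]
    exact ⟨ind a - ind t₁, by rw [AE_two, he], by rw [AR_two, hr, sub_self]⟩
  · have hr : S.rW a = S.rW b := by rw [← S.σE_r a, h, S.σV_r]
    exact ⟨ind a - ind b, by rw [AE_two], by rw [AR_two, hr, sub_self]⟩
  · have he : S.ew a = S.ew b := by rw [← S.σV_e a, h, S.σR_e]
    exact ⟨0, by rw [AE_zero, he, sub_self], AR_zero S⟩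
  · have hr : S.rW a = S.rW b := by rw [← S.σV_r a, h, S.σE_r]
    exact ⟨ind a - ind b, by rw [AE_two], by rw [AR_two, hr, sub_self]⟩

lemma stepRE (a b : Tw) (h : cstep S a b) :
    ∃ c : Tw → k, AE S c = 0 ∧ AR S c = dlt (S.rW a) - dlt (S.rW b) := by
  rcases h with h | h | h | h | h | h
  · set t₁ := S.σV.symm (S.σR a) with ht₁
    have h1 : S.σV t₁ = S.σR a := S.σV.apply_symm_apply _
    have he : S.ew t₁ = S.ew a := by rw [← S.σV_e t₁, h1, S.σR_e]
    have hr : S.rW t₁ = S.rW b := by rw [← S.σV_r t₁, h1, h, S.σE_r]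
    exact ⟨ind a - ind t₁, by rw [AE_two, he, sub_self], by rw [AR_two, hr]⟩
  · have he : S.ew a = S.ew b := by rw [← S.σR_e a, h, S.σV_e]
    exact ⟨ind a - ind b, by rw [AE_two, he, sub_self], by rw [AR_two]⟩
  · set t₁ := S.σV.symm (S.σR b) with ht₁
    have h1 : S.σV t₁ = S.σR b := S.σV.apply_symm_apply _
    have he : S.ew t₁ = S.ew b := by rw [← S.σV_e t₁, h1, S.σR_e]
    have hr : S.rW t₁ = S.rW a := by rw [← S.σV_r t₁, h1, ← h, S.σE_r]
    exact ⟨ind t₁ - ind b, by rw [AE_two, he, sub_self], by rw [AR_two, hr]⟩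
  · have hr : S.rW a = S.rW b := by rw [← S.σE_r a, h, S.σV_r]
    exact ⟨0, AE_zero S, by rw [AR_zero, hr, sub_self]⟩
  · have he : S.ew a = S.ew b := by rw [← S.σV_e a, h, S.σR_e]
    exact ⟨ind a - ind b, by rw [AE_two, he, sub_self], by rw [AR_two]⟩
  · have hr : S.rW a = S.rW b := by rw [← S.σV_r a, h, S.σE_r]
    exact ⟨0, AE_zero S, by rw [AR_zero, hr, sub_self]⟩

lemma reach_V (a b : Tw) :
    ∃ c : Tw → k, AV S c = dlt (S.vw a) - dlt (S.vw b) ∧ AR S c = 0 := by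
  have h : Relation.ReflTransGen (cstep S) a b := S.conn a b
  induction h with
  | refl => exact ⟨0, by rw [AV_zero, sub_self], AR_zero S⟩
  | tail _ hstep ih =>
      obtain ⟨c₁, h1, h2⟩ := ih
      obtain ⟨c₂, h3, h4⟩ := stepV (k := k) S _ _ hstep
      exact ⟨c₁ + c₂, by rw [AV_add, h1, h3, sub_add_sub_cancel],
        by rw [AR_add, h2, h4, add_zero]⟩

lemma reach_E (a b : Tw) :
    ∃ c : Tw → k, AE S c = dlt (S.ew a) - dlt (S.ew b) ∧ AR S c = 0 := by
  have h : Relation.ReflTransGen (cstep S) a b := S.conn a b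
  induction h with
  | refl => exact ⟨0, by rw [AE_zero, sub_self], AR_zero S⟩
  | tail _ hstep ih =>
      obtain ⟨c₁, h1, h2⟩ := ih
      obtain ⟨c₂, h3, h4⟩ := stepE (k := k) S _ _ hstep
      exact ⟨c₁ + c₂, by rw [AE_add, h1, h3, sub_add_sub_cancel],
        by rw [AR_add, h2, h4, add_zero]⟩

lemma reach_RV (a b : Tw) :
    ∃ c : Tw → k, AV S c = 0 ∧ AR S c = dlt (S.rW a) - dlt (S.rW b) := by
  have h : Relation.ReflTransGen (cstep S) a b := S.conn a b
  induction h with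
  | refl => exact ⟨0, AV_zero S, by rw [AR_zero, sub_self]⟩
  | tail _ hstep ih =>
      obtain ⟨c₁, h1, h2⟩ := ih
      obtain ⟨c₂, h3, h4⟩ := stepRV (k := k) S _ _ hstep
      exact ⟨c₁ + c₂, by rw [AV_add, h1, h3, add_zero],
        by rw [AR_add, h2, h4, sub_add_sub_cancel]⟩

lemma reach_RE (a b : Tw) :
    ∃ c : Tw → k, AE S c = 0 ∧ AR S c = dlt (S.rW a) - dlt (S.rW b) := by
  have h : Relation.ReflTransGen (cstep S) a b := S.conn a b
  induction h with
  | refl => exact ⟨0, AE_zero S, by rw [AR_zero, sub_self]⟩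
  | tail _ hstep ih =>
      obtain ⟨c₁, h1, h2⟩ := ih
      obtain ⟨c₂, h3, h4⟩ := stepRE (k := k) S _ _ hstep
      exact ⟨c₁ + c₂, by rw [AE_add, h1, h3, add_zero],
        by rw [AR_add, h2, h4, sub_add_sub_cancel]⟩

end Aux3

end Trinity
namespace Trinity

section Aux4
set_option linter.unusedSectionVars false

variable {V E R Tw Tb : Type} {k : Type} [CommRing k]
variable [Fintype Tw] [DecidableEq V] [DecidableEq E] [DecidableEq R] [DecidableEq Tw]
variable (S : Trinity V E R Tw Tb)

/-- adjacency along an edge of the emerald digraph `D_E` -/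
def relE (S : Trinity V E R Tw Tb) : E → E → Prop := fun e e' =>
  ∃ t : Tw, (S.ew t = e ∧ S.eb (S.σE t) = e') ∨ (S.ew t = e' ∧ S.eb (S.σE t) = e)

/-- adjacency along an edge of the violet digraph `D_V` -/
def relV (S : Trinity V E R Tw Tb) : V → V → Prop := fun v v' =>
  ∃ t : Tw, (S.vw t = v ∧ S.vb (S.σV t) = v') ∨ (S.vw t = v' ∧ S.vb (S.σV t) = v)

lemma relE_step (a b : Tw) (h : cstep S a b) :
    Relation.ReflTransGen (relE S) (S.ew a) (S.ew b) := by
  rcases h with h | h | h | h | h | h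
  · exact Relation.ReflTransGen.single ⟨b, Or.inr ⟨rfl, by rw [← h, S.σR_e]⟩⟩
  · have he : S.ew a = S.ew b := by rw [← S.σR_e a, h, S.σV_e]
    rw [he]
  · exact Relation.ReflTransGen.single ⟨a, Or.inl ⟨rfl, by rw [h, S.σR_e]⟩⟩
  · exact Relation.ReflTransGen.single ⟨a, Or.inl ⟨rfl, by rw [h, S.σV_e]⟩⟩
  · have he : S.ew a = S.ew b := by rw [← S.σV_e a, h, S.σR_e]
    rw [he]
  · exact Relation.ReflTransGen.single ⟨b, Or.inr ⟨rfl, by rw [← h, S.σV_e]⟩⟩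

lemma relV_step (a b : Tw) (h : cstep S a b) :
    Relation.ReflTransGen (relV S) (S.vw a) (S.vw b) := by
  rcases h with h | h | h | h | h | h
  · have hv : S.vw a = S.vw b := by rw [← S.σR_v a, h, S.σE_v]
    rw [hv]
  · exact Relation.ReflTransGen.single ⟨b, Or.inr ⟨rfl, by rw [← h, S.σR_v]⟩⟩
  · have hv : S.vw a = S.vw b := by rw [← S.σE_v a, h, S.σR_v]
    rw [hv]
  · exact Relation.ReflTransGen.single ⟨b, Or.inr ⟨rfl, by rw [← h, S.σE_v]⟩⟩
  · exact Relation.ReflTransGen.single ⟨a, Or.inl ⟨rfl, by rw [h, S.σR_v]⟩⟩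
  · exact Relation.ReflTransGen.single ⟨a, Or.inl ⟨rfl, by rw [h, S.σE_v]⟩⟩

lemma relE_total (e e' : E) : Relation.ReflTransGen (relE S) e e' := by
  obtain ⟨a, rfl⟩ := S.esurj e
  obtain ⟨b, rfl⟩ := S.esurj e'
  have h : Relation.ReflTransGen (cstep S) a b := S.conn a b
  induction h with
  | refl => exact Relation.ReflTransGen.refl
  | tail _ hstep ih => exact ih.trans (relE_step S _ _ hstep)

lemma relV_total (v v' : V) : Relation.ReflTransGen (relV S) v v' := by
  obtain ⟨a, rfl⟩ := S.vsurj v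
  obtain ⟨b, rfl⟩ := S.vsurj v'
  have h : Relation.ReflTransGen (cstep S) a b := S.conn a b
  induction h with
  | refl => exact Relation.ReflTransGen.refl
  | tail _ hstep ih => exact ih.trans (relV_step S _ _ hstep)

lemma const_of_E {M : Type} (w : E → M) (hw : ∀ t, w (S.eb (S.σE t)) = w (S.ew t))
    (e e' : E) : w e = w e' := by
  have h := relE_total S e e'
  induction h with
  | refl => rfl
  | tail _ hstep ih =>
      rcases hstep with ⟨t, ⟨h1, h2⟩ | ⟨h1, h2⟩⟩
      · rw [ih, ← h1, ← h2, hw t]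
      · rw [ih, ← h1, ← h2, hw t]

lemma const_of_V {M : Type} (z : V → M) (hz : ∀ t, z (S.vb (S.σV t)) = z (S.vw t))
    (v v' : V) : z v = z v' := by
  have h := relV_total S v v'
  induction h with
  | refl => rfl
  | tail _ hstep ih =>
      rcases hstep with ⟨t, ⟨h1, h2⟩ | ⟨h1, h2⟩⟩
      · rw [ih, ← h1, ← h2, hz t]
      · rw [ih, ← h1, ← h2, hz t]

include S in
lemma tw_nonempty [Fintype V] [Fintype E] [Fintype R]
    (heuler : Fintype.card V + Fintype.card E + Fintype.card R = Fintype.card Tw + 2) :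
    Nonempty Tw := by
  by_contra h
  have hTw : IsEmpty Tw := not_nonempty_iff.mp h
  have hV : IsEmpty V := ⟨fun v => (S.vsurj v).elim fun t _ => hTw.elim t⟩
  have hE : IsEmpty E := ⟨fun e => (S.esurj e).elim fun t _ => hTw.elim t⟩
  have hR : IsEmpty R := ⟨fun r => (S.rsurj r).elim fun t _ => hTw.elim t⟩
  rw [Fintype.card_eq_zero, Fintype.card_eq_zero, Fintype.card_eq_zero,
    Fintype.card_eq_zero] at heuler
  omega

lemma sum_AV [Fintype V] (c : Tw → k) : ∑ v, AV S c v = ∑ t, c t := by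
  simp only [AV]
  rw [Finset.sum_comm]
  exact Finset.sum_congr rfl fun t _ => by simp [Finset.sum_ite_eq]

lemma sum_AE [Fintype E] (c : Tw → k) : ∑ e, AE S c e = ∑ t, c t := by
  simp only [AE]
  rw [Finset.sum_comm]
  exact Finset.sum_congr rfl fun t _ => by simp [Finset.sum_ite_eq]

lemma sum_AR [Fintype R] (c : Tw → k) : ∑ r, AR S c r = ∑ t, c t := by
  simp only [AR]
  rw [Finset.sum_comm]
  exact Finset.sum_congr rfl fun t _ => by simp [Finset.sum_ite_eq]

lemma AV_finsum {ι : Type} (s : Finset ι) (f : ι → Tw → k) :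
    AV S (∑ i ∈ s, f i) = ∑ i ∈ s, AV S (f i) := by
  induction s using Finset.cons_induction with
  | empty => simp [AV_zero]
  | cons a s ha ih => rw [Finset.sum_cons, Finset.sum_cons, AV_add, ih]

lemma AE_finsum {ι : Type} (s : Finset ι) (f : ι → Tw → k) :
    AE S (∑ i ∈ s, f i) = ∑ i ∈ s, AE S (f i) := by
  induction s using Finset.cons_induction with
  | empty => simp [AE_zero]
  | cons a s ha ih => rw [Finset.sum_cons, Finset.sum_cons, AE_add, ih]

lemma AR_finsum {ι : Type} (s : Finset ι) (f : ι → Tw → k) :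
    AR S (∑ i ∈ s, f i) = ∑ i ∈ s, AR S (f i) := by
  induction s using Finset.cons_induction with
  | empty => simp [AR_zero]
  | cons a s ha ih => rw [Finset.sum_cons, Finset.sum_cons, AR_add, ih]

lemma sum_smul_chi (c : Tw → ℤ) :
    (∑ t, c t • S.chi t) = (AV S c, AE S c, AR S c) := by
  refine Prod.ext ?_ (Prod.ext ?_ ?_)
  · rw [Prod.fst_sum]
    funext v
    rw [Finset.sum_apply]
    exact Finset.sum_congr rfl fun t _ => by
      simp [chi, mul_ite]
  · rw [Prod.snd_sum, Prod.fst_sum]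
    funext e
    rw [Finset.sum_apply]
    exact Finset.sum_congr rfl fun t _ => by
      simp [chi, mul_ite]
  · rw [Prod.snd_sum, Prod.snd_sum]
    funext r
    rw [Finset.sum_apply]
    exact Finset.sum_congr rfl fun t _ => by
      simp [chi, mul_ite]

lemma phiRel_iff [Fintype V] [Fintype E] (x : V → ℤ) (y : E → ℤ) :
    phiRel S x y ↔ (∑ v, x v = 0) ∧ (∑ e, y e = 0) ∧
      ∃ c : Tw → ℤ, x = AV S c ∧ y = AE S c ∧ AR S c = 0 := by
  unfold phiRel
  refine and_congr Iff.rfl (and_congr Iff.rfl (exists_congr fun c => ?_))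
  rw [sum_smul_chi, Prod.mk.injEq, Prod.mk.injEq]
  constructor
  · rintro ⟨h1, h2, h3⟩
    exact ⟨h1, h2, h3.symm⟩
  · rintro ⟨h1, h2, h3⟩
    exact ⟨h1, h2, h3.symm⟩

end Aux4

end Trinity
namespace Trinity

section Rank
set_option linter.unusedSectionVars false
open Module

variable {V E R Tw Tb : Type}
variable [Fintype Tw] [Fintype V] [Fintype E] [Fintype R]
variable [DecidableEq V] [DecidableEq E] [DecidableEq R] [DecidableEq Tw]

lemma sum_smul_dlt {β : Type} {k : Type} [CommRing k] [Fintype β] [DecidableEq β]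
    (a : β → k) : (∑ u, a u • (dlt u : β → k)) = a := by
  funext w
  rw [Finset.sum_apply]
  simp only [Pi.smul_apply, dlt, smul_eq_mul, mul_ite, mul_one, mul_zero]
  simp [Finset.sum_ite_eq']

lemma sum_dlt {β : Type} {k : Type} [CommRing k] [Fintype β] [DecidableEq β]
    (b : β) : (∑ u, (dlt b : β → k) u) = 1 := by
  simp [dlt, Finset.sum_ite_eq]

variable (S : Trinity V E R Tw Tb)

/-- the tension map of `D_E` over `ℚ` -/
def Bq : (E → ℚ) →ₗ[ℚ] (Tw → ℚ) where
  toFun := cE S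
  map_add' w w' := by funext t; simp only [cE, Pi.add_apply]; ring
  map_smul' a w := by funext t; simp only [cE, Pi.smul_apply, smul_eq_mul,
    RingHom.id_apply]; ring

/-- the tension map of `D_V` over `ℚ` -/
def BqV : (V → ℚ) →ₗ[ℚ] (Tw → ℚ) where
  toFun := cV S
  map_add' w w' := by funext t; simp only [cV, Pi.add_apply]; ring
  map_smul' a w := by funext t; simp only [cV, Pi.smul_apply, smul_eq_mul,
    RingHom.id_apply]; ring

def AqVR : (Tw → ℚ) →ₗ[ℚ] ((V → ℚ) × (R → ℚ)) where
  toFun c := (AV S c, AR S c)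
  map_add' c c' := by
    show (AV S (c + c'), AR S (c + c')) = (AV S c, AR S c) + (AV S c', AR S c')
    rw [AV_add, AR_add, Prod.mk_add_mk]
  map_smul' a c := by
    show (AV S (a • c), AR S (a • c)) = a • (AV S c, AR S c)
    rw [AV_smul, AR_smul, Prod.smul_mk]

def AqER : (Tw → ℚ) →ₗ[ℚ] ((E → ℚ) × (R → ℚ)) where
  toFun c := (AE S c, AR S c)
  map_add' c c' := by
    show (AE S (c + c'), AR S (c + c')) = (AE S c, AR S c) + (AE S c', AR S c')
    rw [AE_add, AR_add, Prod.mk_add_mk]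
  map_smul' a c := by
    show (AE S (a • c), AR S (a • c)) = a • (AE S c, AR S c)
    rw [AE_smul, AR_smul, Prod.smul_mk]

def fdVR : ((V → ℚ) × (R → ℚ)) →ₗ[ℚ] ℚ where
  toFun p := (∑ v, p.1 v) - (∑ r, p.2 r)
  map_add' p q := by
    simp only [Prod.fst_add, Prod.snd_add, Pi.add_apply, Finset.sum_add_distrib]
    ring
  map_smul' a p := by
    simp only [Prod.smul_fst, Prod.smul_snd, Pi.smul_apply, smul_eq_mul,
      RingHom.id_apply, ← Finset.mul_sum]
    ring

def fdER : ((E → ℚ) × (R → ℚ)) →ₗ[ℚ] ℚ where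
  toFun p := (∑ e, p.1 e) - (∑ r, p.2 r)
  map_add' p q := by
    simp only [Prod.fst_add, Prod.snd_add, Pi.add_apply, Finset.sum_add_distrib]
    ring
  map_smul' a p := by
    simp only [Prod.smul_fst, Prod.smul_snd, Pi.smul_apply, smul_eq_mul,
      RingHom.id_apply, ← Finset.mul_sum]
    ring

def CqE : ℚ →ₗ[ℚ] (E → ℚ) where
  toFun a := fun _ => a
  map_add' a b := rfl
  map_smul' a b := rfl

def CqV : ℚ →ₗ[ℚ] (V → ℚ) where
  toFun a := fun _ => a
  map_add' a b := rfl
  map_smul' a b := rfl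

lemma ker_Bq (t₀ : Tw) : LinearMap.ker (Bq S) = LinearMap.range (CqE (E := E)) := by
  apply le_antisymm
  · intro w hw
    have hw' : cE S w = 0 := hw
    have hconst : ∀ t : Tw, w (S.eb (S.σE t)) = w (S.ew t) := fun t => by
      have := congrFun hw' t
      simp only [cE, Pi.zero_apply, sub_eq_zero] at this
      exact this
    exact ⟨w (S.ew t₀), funext fun e => const_of_E S w hconst (S.ew t₀) e⟩
  · rintro _ ⟨a, rfl⟩
    show cE S _ = 0
    funext t
    simp [cE, CqE]

lemma ker_BqV (t₀ : Tw) : LinearMap.ker (BqV S) = LinearMap.range (CqV (V := V)) := by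
  apply le_antisymm
  · intro w hw
    have hw' : cV S w = 0 := hw
    have hconst : ∀ t : Tw, w (S.vb (S.σV t)) = w (S.vw t) := fun t => by
      have := congrFun hw' t
      simp only [cV, Pi.zero_apply, sub_eq_zero] at this
      exact this
    exact ⟨w (S.vw t₀), funext fun v => const_of_V S w hconst (S.vw t₀) v⟩
  · rintro _ ⟨a, rfl⟩
    show cV S _ = 0
    funext t
    simp [cV, CqV]

lemma range_AqVR (t₀ : Tw) : LinearMap.range (AqVR S) = LinearMap.ker ((fdVR (V := V) (R := R))) := by
  apply le_antisymm
  · rintro _ ⟨c, rfl⟩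
    show (fdVR (V := V) (R := R)) (AV S c, AR S c) = 0
    show (∑ v, AV S c v) - (∑ r, AR S c r) = 0
    rw [sum_AV, sum_AR, sub_self]
  · rintro ⟨a, b⟩ hab
    have hab' : (∑ v, a v) = (∑ r, b r) := by
      have : (∑ v, a v) - (∑ r, b r) = 0 := hab
      linarith
    have hgV : ∀ v : V, ∃ c : Tw → ℚ, AV S c = dlt v - dlt (S.vw t₀) ∧ AR S c = 0 := by
      intro v
      obtain ⟨av, rfl⟩ := S.vsurj v
      exact reach_V (k := ℚ) S av t₀
    have hgR : ∀ r : R, ∃ c : Tw → ℚ, AV S c = 0 ∧ AR S c = dlt r - dlt (S.rW t₀) := by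
      intro r
      obtain ⟨ar, rfl⟩ := S.rsurj r
      exact reach_RV (k := ℚ) S ar t₀
    choose gV hgV1 hgV2 using hgV
    choose gR hgR1 hgR2 using hgR
    refine ⟨(∑ v, a v • gV v) + (∑ r, b r • gR r) + ((∑ v, a v) • ind t₀), ?_⟩
    have hAV : AV S ((∑ v, a v • gV v) + (∑ r, b r • gR r) + ((∑ v, a v) • ind t₀)) = a := by
      rw [AV_add, AV_add, AV_finsum, AV_finsum, AV_smul, AV_ind]
      have h1 : ∑ v, AV S (a v • gV v) = a - (∑ v, a v) • dlt (S.vw t₀) := by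
        have : ∀ v ∈ Finset.univ, AV S (a v • gV v)
            = a v • (dlt v : V → ℚ) - a v • dlt (S.vw t₀) := fun v _ => by
          rw [AV_smul, hgV1, smul_sub]
        rw [Finset.sum_congr rfl this, Finset.sum_sub_distrib, sum_smul_dlt,
          ← Finset.sum_smul]
      have h2 : ∑ r, AV S (b r • gR r) = 0 := by
        refine Finset.sum_eq_zero fun r _ => by rw [AV_smul, hgR1, smul_zero]
      rw [h1, h2]
      abel
    have hAR : AR S ((∑ v, a v • gV v) + (∑ r, b r • gR r) + ((∑ v, a v) • ind t₀)) = b := by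
      rw [AR_add, AR_add, AR_finsum, AR_finsum, AR_smul, AR_ind]
      have h1 : ∑ v, AR S (a v • gV v) = 0 := by
        refine Finset.sum_eq_zero fun v _ => by rw [AR_smul, hgV2, smul_zero]
      have h2 : ∑ r, AR S (b r • gR r) = b - (∑ r, b r) • dlt (S.rW t₀) := by
        have : ∀ r ∈ Finset.univ, AR S (b r • gR r)
            = b r • (dlt r : R → ℚ) - b r • dlt (S.rW t₀) := fun r _ => by
          rw [AR_smul, hgR2, smul_sub]
        rw [Finset.sum_congr rfl this, Finset.sum_sub_distrib, sum_smul_dlt,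
          ← Finset.sum_smul]
      rw [h1, h2, hab']
      abel
    show (AV S _, AR S _) = (a, b)
    rw [hAV, hAR]

lemma range_AqER (t₀ : Tw) : LinearMap.range (AqER S) = LinearMap.ker ((fdER (E := E) (R := R))) := by
  apply le_antisymm
  · rintro _ ⟨c, rfl⟩
    show (fdER (E := E) (R := R)) (AE S c, AR S c) = 0
    show (∑ e, AE S c e) - (∑ r, AR S c r) = 0
    rw [sum_AE, sum_AR, sub_self]
  · rintro ⟨a, b⟩ hab
    have hab' : (∑ e, a e) = (∑ r, b r) := by
      have : (∑ e, a e) - (∑ r, b r) = 0 := hab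
      linarith
    have hgE : ∀ e : E, ∃ c : Tw → ℚ, AE S c = dlt e - dlt (S.ew t₀) ∧ AR S c = 0 := by
      intro e
      obtain ⟨ae, rfl⟩ := S.esurj e
      exact reach_E (k := ℚ) S ae t₀
    have hgR : ∀ r : R, ∃ c : Tw → ℚ, AE S c = 0 ∧ AR S c = dlt r - dlt (S.rW t₀) := by
      intro r
      obtain ⟨ar, rfl⟩ := S.rsurj r
      exact reach_RE (k := ℚ) S ar t₀
    choose gE hgE1 hgE2 using hgE
    choose gR hgR1 hgR2 using hgR
    refine ⟨(∑ e, a e • gE e) + (∑ r, b r • gR r) + ((∑ e, a e) • ind t₀), ?_⟩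
    have hAE : AE S ((∑ e, a e • gE e) + (∑ r, b r • gR r) + ((∑ e, a e) • ind t₀)) = a := by
      rw [AE_add, AE_add, AE_finsum, AE_finsum, AE_smul, AE_ind]
      have h1 : ∑ e, AE S (a e • gE e) = a - (∑ e, a e) • dlt (S.ew t₀) := by
        have : ∀ e ∈ Finset.univ, AE S (a e • gE e)
            = a e • (dlt e : E → ℚ) - a e • dlt (S.ew t₀) := fun e _ => by
          rw [AE_smul, hgE1, smul_sub]
        rw [Finset.sum_congr rfl this, Finset.sum_sub_distrib, sum_smul_dlt,
          ← Finset.sum_smul]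
      have h2 : ∑ r, AE S (b r • gR r) = 0 := by
        refine Finset.sum_eq_zero fun r _ => by rw [AE_smul, hgR1, smul_zero]
      rw [h1, h2]
      abel
    have hAR : AR S ((∑ e, a e • gE e) + (∑ r, b r • gR r) + ((∑ e, a e) • ind t₀)) = b := by
      rw [AR_add, AR_add, AR_finsum, AR_finsum, AR_smul, AR_ind]
      have h1 : ∑ e, AR S (a e • gE e) = 0 := by
        refine Finset.sum_eq_zero fun e _ => by rw [AR_smul, hgE2, smul_zero]
      have h2 : ∑ r, AR S (b r • gR r) = b - (∑ r, b r) • dlt (S.rW t₀) := by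
        have : ∀ r ∈ Finset.univ, AR S (b r • gR r)
            = b r • (dlt r : R → ℚ) - b r • dlt (S.rW t₀) := fun r _ => by
          rw [AR_smul, hgR2, smul_sub]
        rw [Finset.sum_congr rfl this, Finset.sum_sub_distrib, sum_smul_dlt,
          ← Finset.sum_smul]
      rw [h1, h2, hab']
      abel
    show (AE S _, AR S _) = (a, b)
    rw [hAE, hAR]

lemma ker_AqVR_eq (t₀ : Tw)
    (heuler : Fintype.card V + Fintype.card E + Fintype.card R = Fintype.card Tw + 2) :
    LinearMap.ker (AqVR S) = LinearMap.range (Bq S) := by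
  have hle : LinearMap.range (Bq S) ≤ LinearMap.ker (AqVR S) := by
    rintro _ ⟨w, rfl⟩
    show (AV S (cE S w), AR S (cE S w)) = 0
    rw [AV_cE, AR_cE]
    rfl
  -- dimension count
  have hB := LinearMap.finrank_range_add_finrank_ker (Bq S)
  have hA := LinearMap.finrank_range_add_finrank_ker (AqVR S)
  have hf := LinearMap.finrank_range_add_finrank_ker ((fdVR (V := V) (R := R)))
  have hBker : finrank ℚ (LinearMap.ker (Bq S)) = 1 := by
    rw [ker_Bq S t₀]
    have hinj : Function.Injective (CqE (E := E)) := by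
      intro a b hab
      have := congrFun hab (S.ew t₀)
      exact this
    rw [LinearMap.finrank_range_of_inj hinj, finrank_self]
  have hfr : finrank ℚ (LinearMap.range ((fdVR (V := V) (R := R)))) = 1 := by
    have : LinearMap.range ((fdVR (V := V) (R := R))) = ⊤ := by
      rw [LinearMap.range_eq_top]
      intro q
      refine ⟨(q • dlt (S.vw t₀), 0), ?_⟩
      show (∑ v, (q • (dlt (S.vw t₀) : V → ℚ)) v) - (∑ r, (0 : R → ℚ) r) = q
      simp only [Pi.smul_apply, smul_eq_mul, ← Finset.mul_sum, Pi.zero_apply,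
        Finset.sum_const_zero, sub_zero, sum_dlt, mul_one]
    rw [this, finrank_top, finrank_self]
  have hArange : finrank ℚ (LinearMap.range (AqVR S))
      = finrank ℚ (LinearMap.ker ((fdVR (V := V) (R := R)))) := by rw [range_AqVR S t₀]
  have hTw : finrank ℚ (Tw → ℚ) = Fintype.card Tw := finrank_pi ℚ
  have hE' : finrank ℚ (E → ℚ) = Fintype.card E := finrank_pi ℚ
  have hVR : finrank ℚ ((V → ℚ) × (R → ℚ)) = Fintype.card V + Fintype.card R := by
    rw [finrank_prod, finrank_pi, finrank_pi]
  rw [hE', hBker] at hB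
  rw [hTw, hArange] at hA
  rw [hfr, hVR] at hf
  exact (Submodule.eq_of_le_of_finrank_le hle (by omega)).symm

lemma ker_AqER_eq (t₀ : Tw)
    (heuler : Fintype.card V + Fintype.card E + Fintype.card R = Fintype.card Tw + 2) :
    LinearMap.ker (AqER S) = LinearMap.range (BqV S) := by
  have hle : LinearMap.range (BqV S) ≤ LinearMap.ker (AqER S) := by
    rintro _ ⟨z, rfl⟩
    show (AE S (cV S z), AR S (cV S z)) = 0
    rw [AE_cV, AR_cV]
    rfl
  have hB := LinearMap.finrank_range_add_finrank_ker (BqV S)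
  have hA := LinearMap.finrank_range_add_finrank_ker (AqER S)
  have hf := LinearMap.finrank_range_add_finrank_ker ((fdER (E := E) (R := R)))
  have hBker : finrank ℚ (LinearMap.ker (BqV S)) = 1 := by
    rw [ker_BqV S t₀]
    have hinj : Function.Injective (CqV (V := V)) := by
      intro a b hab
      have := congrFun hab (S.vw t₀)
      exact this
    rw [LinearMap.finrank_range_of_inj hinj, finrank_self]
  have hfr : finrank ℚ (LinearMap.range ((fdER (E := E) (R := R)))) = 1 := by
    have : LinearMap.range ((fdER (E := E) (R := R))) = ⊤ := by
      rw [LinearMap.range_eq_top]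
      intro q
      refine ⟨(q • dlt (S.ew t₀), 0), ?_⟩
      show (∑ e, (q • (dlt (S.ew t₀) : E → ℚ)) e) - (∑ r, (0 : R → ℚ) r) = q
      simp only [Pi.smul_apply, smul_eq_mul, ← Finset.mul_sum, Pi.zero_apply,
        Finset.sum_const_zero, sub_zero, sum_dlt, mul_one]
    rw [this, finrank_top, finrank_self]
  have hArange : finrank ℚ (LinearMap.range (AqER S))
      = finrank ℚ (LinearMap.ker ((fdER (E := E) (R := R)))) := by rw [range_AqER S t₀]
  have hTw : finrank ℚ (Tw → ℚ) = Fintype.card Tw := finrank_pi ℚ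
  have hV' : finrank ℚ (V → ℚ) = Fintype.card V := finrank_pi ℚ
  have hER : finrank ℚ ((E → ℚ) × (R → ℚ)) = Fintype.card E + Fintype.card R := by
    rw [finrank_prod, finrank_pi, finrank_pi]
  rw [hV', hBker] at hB
  rw [hTw, hArange] at hA
  rw [hfr, hER] at hf
  exact (Submodule.eq_of_le_of_finrank_le hle (by omega)).symm

end Rank

end Trinity
namespace Trinity

section IntLift
set_option linter.unusedSectionVars false

variable {V E R Tw Tb : Type}
variable [Fintype Tw] [Fintype V] [Fintype E] [Fintype R]
variable [DecidableEq V] [DecidableEq E] [DecidableEq R] [DecidableEq Tw]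
variable (S : Trinity V E R Tw Tb)

lemma cast_AV (d : Tw → ℤ) (v : V) :
    AV S (fun t => (d t : ℚ)) v = ((AV S d v : ℤ) : ℚ) := by
  unfold AV
  push_cast
  exact Finset.sum_congr rfl fun t _ => by split_ifs <;> simp

lemma cast_AE (d : Tw → ℤ) (e : E) :
    AE S (fun t => (d t : ℚ)) e = ((AE S d e : ℤ) : ℚ) := by
  unfold AE
  push_cast
  exact Finset.sum_congr rfl fun t _ => by split_ifs <;> simp

lemma cast_AR (d : Tw → ℤ) (r : R) :
    AR S (fun t => (d t : ℚ)) r = ((AR S d r : ℤ) : ℚ) := by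
  unfold AR
  push_cast
  exact Finset.sum_congr rfl fun t _ => by split_ifs <;> simp

lemma exists_w_int (t₀ : Tw)
    (heuler : Fintype.card V + Fintype.card E + Fintype.card R = Fintype.card Tw + 2)
    (d : Tw → ℤ) (hV : AV S d = 0) (hR : AR S d = 0) :
    ∃ w : E → ℤ, cE S w = d := by
  have hVq : AV S (fun t => (d t : ℚ)) = 0 := by
    funext v
    rw [cast_AV, congrFun hV v]
    simp
  have hRq : AR S (fun t => (d t : ℚ)) = 0 := by
    funext r
    rw [cast_AR, congrFun hR r]
    simp
  have hmem : (fun t => (d t : ℚ)) ∈ LinearMap.ker (AqVR S) := by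
    show (AV S _, AR S _) = 0
    rw [hVq, hRq]
    rfl
  rw [ker_AqVR_eq S t₀ heuler] at hmem
  obtain ⟨w, hw⟩ := hmem
  have hw' : ∀ t, w (S.eb (S.σE t)) - w (S.ew t) = (d t : ℚ) := fun t => congrFun hw t
  have hP : ∀ e : E, ∃ m : ℤ, w e = w (S.ew t₀) + (m : ℚ) := by
    intro e
    have hreach := relE_total S (S.ew t₀) e
    induction hreach with
    | refl => exact ⟨0, by simp⟩
    | tail _ hstep ih =>
        obtain ⟨m, hm⟩ := ih
        rcases hstep with ⟨t, ⟨h1, h2⟩ | ⟨h1, h2⟩⟩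
        · refine ⟨m + d t, ?_⟩
          have hwt := hw' t
          rw [h1, h2] at hwt
          push_cast
          linarith
        · refine ⟨m - d t, ?_⟩
          have hwt := hw' t
          rw [h1, h2] at hwt
          push_cast
          linarith
  choose m hm using hP
  refine ⟨m, ?_⟩
  funext t
  have h1 := hm (S.eb (S.σE t))
  have h2 := hm (S.ew t)
  have h3 := hw' t
  have : ((m (S.eb (S.σE t)) - m (S.ew t) : ℤ) : ℚ) = ((d t : ℤ) : ℚ) := by
    push_cast
    linarith
  exact_mod_cast this

lemma exists_z_int (t₀ : Tw)
    (heuler : Fintype.card V + Fintype.card E + Fintype.card R = Fintype.card Tw + 2)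
    (d : Tw → ℤ) (hE : AE S d = 0) (hR : AR S d = 0) :
    ∃ z : V → ℤ, cV S z = d := by
  have hEq : AE S (fun t => (d t : ℚ)) = 0 := by
    funext e
    rw [cast_AE, congrFun hE e]
    simp
  have hRq : AR S (fun t => (d t : ℚ)) = 0 := by
    funext r
    rw [cast_AR, congrFun hR r]
    simp
  have hmem : (fun t => (d t : ℚ)) ∈ LinearMap.ker (AqER S) := by
    show (AE S _, AR S _) = 0
    rw [hEq, hRq]
    rfl
  rw [ker_AqER_eq S t₀ heuler] at hmem
  obtain ⟨z, hz⟩ := hmem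
  have hz' : ∀ t, z (S.vb (S.σV t)) - z (S.vw t) = (d t : ℚ) := fun t => congrFun hz t
  have hP : ∀ v : V, ∃ m : ℤ, z v = z (S.vw t₀) + (m : ℚ) := by
    intro v
    have hreach := relV_total S (S.vw t₀) v
    induction hreach with
    | refl => exact ⟨0, by simp⟩
    | tail _ hstep ih =>
        obtain ⟨m, hm⟩ := ih
        rcases hstep with ⟨t, ⟨h1, h2⟩ | ⟨h1, h2⟩⟩
        · refine ⟨m + d t, ?_⟩
          have hzt := hz' t
          rw [h1, h2] at hzt
          push_cast
          linarith
        · refine ⟨m - d t, ?_⟩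
          have hzt := hz' t
          rw [h1, h2] at hzt
          push_cast
          linarith
  choose m hm using hP
  refine ⟨m, ?_⟩
  funext t
  have h1 := hm (S.vb (S.σV t))
  have h2 := hm (S.vw t)
  have h3 := hz' t
  have : ((m (S.vb (S.σV t)) - m (S.vw t) : ℤ) : ℚ) = ((d t : ℤ) : ℚ) := by
    push_cast
    linarith
  exact_mod_cast this

end IntLift

end Trinity

/-- the map `φ_{V→E} : Pic⁰(D_V) → Pic⁰(D_E)`, defined by
`φ_{V→E}([x]) = [y]` whenever `(x, 0, 0) ≈_W (0, −y, 0)`, is a well-defined group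
isomorphism: it is well defined (descends to linear-equivalence classes), totally
defined, injective, surjective, and additive. -/
theorem phi_V_to_E_well_defined_isomorphism
    {V E R Tw Tb : Type} [Fintype V] [Fintype E] [Fintype R] [Fintype Tw]
    [DecidableEq V] [DecidableEq E] [DecidableEq R]
    (S : Trinity V E R Tw Tb)
    (heuler : Fintype.card V + Fintype.card E + Fintype.card R = Fintype.card Tw + 2) :
    (∀ x x' y y', phiRel S x y → phiRel S x' y' → S.linEqV x x' → S.linEqE y y') ∧
    (∀ x : V → ℤ, ∑ v, x v = 0 → ∃ y : E → ℤ, phiRel S x y) ∧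
    (∀ x x' y y', phiRel S x y → phiRel S x' y' → S.linEqE y y' → S.linEqV x x') ∧
    (∀ y : E → ℤ, ∑ e, y e = 0 → ∃ x : V → ℤ, phiRel S x y) ∧
    (∀ x x' y y', phiRel S x y → phiRel S x' y' → phiRel S (x + x') (y + y')) := by
  classical
  obtain ⟨t₀⟩ := Trinity.tw_nonempty S heuler
  open Trinity in
  refine ⟨?_, ?_, ?_, ?_, ?_⟩
  · -- well defined
    rintro x x' y y' hxy hxy' ⟨z, hz⟩
    rw [Trinity.phiRel_iff] at hxy hxy'
    obtain ⟨hx0, hy0, c, hc1, hc2, hc3⟩ := hxy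
    obtain ⟨hx0', hy0', c', hc1', hc2', hc3'⟩ := hxy'
    have hdV : Trinity.AV S (c' - c - Trinity.cV S z) = 0 := by
      rw [Trinity.AV_sub, Trinity.AV_sub, Trinity.AV_cV, ← hc1, ← hc1', hz]
      abel
    have hdR : Trinity.AR S (c' - c - Trinity.cV S z) = 0 := by
      rw [Trinity.AR_sub, Trinity.AR_sub, Trinity.AR_cV, hc3, hc3']
      abel
    obtain ⟨w, hw⟩ := Trinity.exists_w_int S t₀ heuler _ hdV hdR
    refine ⟨w, ?_⟩
    have hAE : Trinity.AE S (c' - c - Trinity.cV S z) = S.lapE w := by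
      rw [← hw, Trinity.AE_cE]
    rw [Trinity.AE_sub, Trinity.AE_sub, Trinity.AE_cV, ← hc2, ← hc2', sub_zero,
      sub_eq_iff_eq_add] at hAE
    rw [hAE, add_comm]
  · -- totally defined
    intro x hx
    have hg : ∀ v : V, ∃ c : Tw → ℤ,
        Trinity.AV S c = Trinity.dlt v - Trinity.dlt (S.vw t₀) ∧ Trinity.AR S c = 0 := by
      intro v
      obtain ⟨a, rfl⟩ := S.vsurj v
      exact Trinity.reach_V (k := ℤ) S a t₀
    choose g hg1 hg2 using hg
    refine ⟨Trinity.AE S (∑ v, x v • g v), ?_⟩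
    rw [Trinity.phiRel_iff]
    have hAV : Trinity.AV S (∑ v, x v • g v) = x := by
      rw [Trinity.AV_finsum]
      have h1 : ∀ v ∈ Finset.univ, Trinity.AV S (x v • g v)
          = x v • (Trinity.dlt v : V → ℤ) - x v • Trinity.dlt (S.vw t₀) := fun v _ => by
        rw [Trinity.AV_smul, hg1, smul_sub]
      rw [Finset.sum_congr rfl h1, Finset.sum_sub_distrib, Trinity.sum_smul_dlt,
        ← Finset.sum_smul, hx, zero_smul, sub_zero]
    have hAR : Trinity.AR S (∑ v, x v • g v) = 0 := by
      rw [Trinity.AR_finsum]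
      exact Finset.sum_eq_zero fun v _ => by rw [Trinity.AR_smul, hg2, smul_zero]
    have hsum : ∑ t, (∑ v, x v • g v) t = 0 := by
      rw [← Trinity.sum_AV S, hAV, hx]
    exact ⟨hx, by rw [Trinity.sum_AE S, hsum], _, hAV.symm, rfl, hAR⟩
  · -- injective
    rintro x x' y y' hxy hxy' ⟨w, hw⟩
    rw [Trinity.phiRel_iff] at hxy hxy'
    obtain ⟨hx0, hy0, c, hc1, hc2, hc3⟩ := hxy
    obtain ⟨hx0', hy0', c', hc1', hc2', hc3'⟩ := hxy'
    have hdE : Trinity.AE S (c' - c - Trinity.cE S w) = 0 := by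
      rw [Trinity.AE_sub, Trinity.AE_sub, Trinity.AE_cE, ← hc2, ← hc2', hw]
      abel
    have hdR : Trinity.AR S (c' - c - Trinity.cE S w) = 0 := by
      rw [Trinity.AR_sub, Trinity.AR_sub, Trinity.AR_cE, hc3, hc3']
      abel
    obtain ⟨z, hz⟩ := Trinity.exists_z_int S t₀ heuler _ hdE hdR
    refine ⟨z, ?_⟩
    have hAV : Trinity.AV S (c' - c - Trinity.cE S w) = S.lapV z := by
      rw [← hz, Trinity.AV_cV]
    rw [Trinity.AV_sub, Trinity.AV_sub, Trinity.AV_cE, ← hc1, ← hc1', sub_zero,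
      sub_eq_iff_eq_add] at hAV
    rw [hAV, add_comm]
  · -- surjective
    intro y hy
    have hg : ∀ e : E, ∃ c : Tw → ℤ,
        Trinity.AE S c = Trinity.dlt e - Trinity.dlt (S.ew t₀) ∧ Trinity.AR S c = 0 := by
      intro e
      obtain ⟨a, rfl⟩ := S.esurj e
      exact Trinity.reach_E (k := ℤ) S a t₀
    choose g hg1 hg2 using hg
    refine ⟨Trinity.AV S (∑ e, y e • g e), ?_⟩
    rw [Trinity.phiRel_iff]
    have hAE : Trinity.AE S (∑ e, y e • g e) = y := by
      rw [Trinity.AE_finsum]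
      have h1 : ∀ e ∈ Finset.univ, Trinity.AE S (y e • g e)
          = y e • (Trinity.dlt e : E → ℤ) - y e • Trinity.dlt (S.ew t₀) := fun e _ => by
        rw [Trinity.AE_smul, hg1, smul_sub]
      rw [Finset.sum_congr rfl h1, Finset.sum_sub_distrib, Trinity.sum_smul_dlt,
        ← Finset.sum_smul, hy, zero_smul, sub_zero]
    have hAR : Trinity.AR S (∑ e, y e • g e) = 0 := by
      rw [Trinity.AR_finsum]
      exact Finset.sum_eq_zero fun e _ => by rw [Trinity.AR_smul, hg2, smul_zero]
    have hsum : ∑ t, (∑ e, y e • g e) t = 0 := by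
      rw [← Trinity.sum_AE S, hAE, hy]
    exact ⟨by rw [Trinity.sum_AV S, hsum], hy, _, rfl, hAE.symm, hAR⟩
  · -- additive
    rintro x x' y y' hxy hxy'
    rw [Trinity.phiRel_iff] at hxy hxy' ⊢
    obtain ⟨hx0, hy0, c, hc1, hc2, hc3⟩ := hxy
    obtain ⟨hx0', hy0', c', hc1', hc2', hc3'⟩ := hxy'
    refine ⟨?_, ?_, c + c', ?_, ?_, ?_⟩
    · simp only [Pi.add_apply, Finset.sum_add_distrib, hx0, hx0', add_zero]
    · simp only [Pi.add_apply, Finset.sum_add_distrib, hy0, hy0', add_zero]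
    · rw [Trinity.AV_add, hc1, hc1']
    · rw [Trinity.AE_add, hc2, hc2']
    · rw [Trinity.AR_add, hc3, hc3', add_zero]
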